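/- arXiv:0712.2370 — 2 statements merged into one kernel-verified Lean document; each statement's English description precedes it below -/
import Mathlib

section
/- Let C be a Calabi–Yau triangulated category of CY-dimension 2 with a cluster-tilting object T and let Γ = End_C(T) be the endomorphism algebra of T in C. If L is a tilting Γ-module, then the endomorphism algebra End_Γ(L)^op is a quotient of End_C(L)^op, the endomorphism algebra in C of the object of C corresponding to L under the equivalence C/add(ST) ≃ mod Γ. -/
set_option linter.unusedVariables false
set_option linter.unusedSectionVars false

open CategoryTheory Limits Pretriangulated

universe v u u₂

namespace CYPaper

section ModuleDefs
variable (R : Type v) [Ring R]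

/-- `Ext¹_R(M,N) = 0`: every short exact sequence `0 → N → E → M → 0` of `R`-modules splits. -/
def Ext1Zero (M N : ModuleCat.{v} R) : Prop :=
  ∀ (E : ModuleCat.{v} R) (f : N ⟶ E) (g : E ⟶ M),
    Function.Injective f → Function.Surjective g → LinearMap.range f.hom = LinearMap.ker g.hom →
    ∃ s : M ⟶ E, s ≫ g = 𝟙 M

/-- `M` has projective dimension at most one: it admits a projective resolution
`0 → P₁ → P₀ → M → 0`. -/
def PdLeOne (M : ModuleCat.{v} R) : Prop :=
  ∃ (P₀ P₁ : ModuleCat.{v} R) (f : P₁ ⟶ P₀) (g : P₀ ⟶ M),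
    Module.Projective R P₀ ∧ Module.Projective R P₁ ∧
    Function.Injective f ∧ Function.Surjective g ∧ LinearMap.range f.hom = LinearMap.ker g.hom

/-- `M` belongs to `add L`: it is a direct summand of a finite direct sum of copies of `L`. -/
def MemAdd (L M : ModuleCat.{v} R) : Prop :=
  ∃ (n : ℕ) (s : M ⟶ ModuleCat.of R (Fin n → L)) (r : ModuleCat.of R (Fin n → L) ⟶ M),
    s ≫ r = 𝟙 M

/-- `L` is a tilting `R`-module: `pd L ≤ 1`, `Ext¹(L,L) = 0`, and there is an exact
sequence `0 → R → L⁰ → L¹ → 0` with `L⁰, L¹ ∈ add L`. -/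
def IsTiltingModule (L : ModuleCat.{v} R) : Prop :=
  PdLeOne R L ∧ Ext1Zero R L L ∧
  ∃ (L₀ L₁ : ModuleCat.{v} R) (a : ModuleCat.of R R ⟶ L₀) (b : L₀ ⟶ L₁),
    MemAdd R L L₀ ∧ MemAdd R L L₁ ∧
    Function.Injective a ∧ Function.Surjective b ∧ LinearMap.range a.hom = LinearMap.ker b.hom

end ModuleDefs

section Triangulated
variable (k : Type*) [Field k]
variable (C : Type u) [Category.{v} C] [Preadditive C] [Linear k C]
  [HasZeroObject C] [HasShift C ℤ] [∀ n : ℤ, (shiftFunctor C n).Additive]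
  [Pretriangulated C] [IsTriangulated C]
  [IsIdempotentComplete C] [HasFiniteBiproducts C]
  [∀ X Y : C, FiniteDimensional k (X ⟶ Y)]

/-- The data of a Serre functor on the `k`-linear category `C`: an autoequivalence `Fun`
together with bifunctorial isomorphisms `Hom(X,Y) ≅ D Hom(Y, Fun X)`. -/
structure SerreData where
  Fun : C ⥤ C
  isEquiv : Fun.IsEquivalence
  eta : ∀ X Y : C, (X ⟶ Y) ≃ₗ[k] Module.Dual k (Y ⟶ Fun.obj X)
  nat_left : ∀ {X X' Y : C} (f : X' ⟶ X) (φ : X ⟶ Y) (g : Y ⟶ Fun.obj X'),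
    eta X' Y (f ≫ φ) g = eta X Y φ (g ≫ Fun.map f)
  nat_right : ∀ {X Y Y' : C} (φ : X ⟶ Y) (h : Y ⟶ Y') (g : Y' ⟶ Fun.obj X),
    eta X Y' (φ ≫ h) g = eta X Y φ (h ≫ g)

/-- `C` is Calabi–Yau of CY-dimension `2` relative to the Serre functor `S`:
there is an isomorphism of functors `S² ≅ Σ`. -/
def IsCY2 (S : SerreData k C) : Prop := Nonempty (shiftFunctor C (2 : ℤ) ≅ S.Fun)

variable {C}

/-- `X` belongs to `add T`: it is a direct summand of a finite direct sum of copies of `T`. -/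
def inAdd (T X : C) : Prop :=
  ∃ (n : ℕ) (s : X ⟶ ⨁ (fun _ : Fin n => T)) (r : (⨁ fun _ : Fin n => T) ⟶ X),
    s ≫ r = 𝟙 X

/-- `T` is a cluster-tilting object of `C`: `Ext¹(T,T) = 0` and any object `X` with
`Hom(X, ST) = 0` lies in `add T`. -/
def IsClusterTilting (T : C) : Prop :=
  (∀ f : T ⟶ T⟦(1 : ℤ)⟧, f = 0) ∧
  ∀ X : C, (∀ f : X ⟶ T⟦(1 : ℤ)⟧, f = 0) → inAdd T X

/-- `Hom(T,X)` is a right module over `Γ = End T`, i.e. a left module over `(End T)ᵐᵒᵖ`,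
by precomposition. -/
instance homModule (T X : C) : Module (End T)ᵐᵒᵖ (T ⟶ X) where
  smul φ f := φ.unop ≫ f
  one_smul f := Category.id_comp f
  mul_smul a b f := Category.assoc a.unop b.unop f
  smul_zero a := comp_zero
  smul_add a f g := Preadditive.comp_add _ _ _ _ _ _
  add_smul a b f := Preadditive.add_comp _ _ _ _ _ _
  zero_smul f := zero_comp

/-- The functor `F = Hom_C(T,−) : C ⥤ mod Γ`, where `Γ = End T` and `mod Γ` is realized
as (left) modules over `(End T)ᵐᵒᵖ` (i.e. right `End T`-modules). -/
def homFunctor (T : C) : C ⥤ ModuleCat.{v} (End T)ᵐᵒᵖ where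
  obj X := ModuleCat.of _ (T ⟶ X)
  map f :=
    ModuleCat.ofHom
    { toFun := fun g => g ≫ f
      map_add' := fun g h => Preadditive.add_comp _ _ _ _ _ _
      map_smul' := fun a g => Category.assoc a.unop g f }
  map_id X := by ext g; exact Category.comp_id g
  map_comp f g := by ext h; exact (Category.assoc _ _ _).symm

end Triangulated

/-- **Corollary.** Let `C` be a 2-Calabi–Yau triangulated category with cluster-tilting
object `T` and `Γ = End_C(T)`. If `L` is a tilting `Γ`-module and `L⁺` is the object of `C`
corresponding to `L` under the equivalence `C/add(ST) ≃ mod Γ`, then `End_Γ(L)ᵒᵖ` is a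
quotient of `End_C(L⁺)ᵒᵖ`. -/
theorem end_of_tilting_is_quotient
    {k : Type*} [Field k] [IsAlgClosed k]
    {C : Type u} [Category.{v} C] [Preadditive C] [Linear k C]
    [HasZeroObject C] [HasShift C ℤ] [∀ n : ℤ, (shiftFunctor C n).Additive]
    [Pretriangulated C] [IsTriangulated C]
    [IsIdempotentComplete C] [HasFiniteBiproducts C]
    [∀ X Y : C, FiniteDimensional k (X ⟶ Y)]
    (S : SerreData k C) (hCY : IsCY2 k C S)
    (T : C) (hT : IsClusterTilting T)
    (L : ModuleCat.{v} (End T)ᵐᵒᵖ) [Module.Finite (End T)ᵐᵒᵖ L]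
    (hL : IsTiltingModule (End T)ᵐᵒᵖ L)
    (Lplus : C) (hLift : Nonempty ((homFunctor T).obj Lplus ≅ L)) :
    ∃ φ : (End Lplus)ᵐᵒᵖ →+* (Module.End (End T)ᵐᵒᵖ L)ᵐᵒᵖ, Function.Surjective φ := by
  classical
  obtain ⟨e⟩ := hLift
  obtain ⟨ε⟩ := hCY
  -- Hom(T⟦-1⟧, T) = 0
  have hm1 : ∀ v : ((T : C)⟦(-1:ℤ)⟧ : C) ⟶ T, v = 0 := by
    intro v
    apply (shiftFunctor C (1:ℤ)).map_injective
    rw [Functor.map_zero]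
    have h1 : ((shiftEquiv C (1:ℤ)).counitIso.app T).inv ≫ (shiftFunctor C (1:ℤ)).map v = 0 :=
      hT.1 _
    have h1' := congrArg (fun x => ((shiftEquiv C (1:ℤ)).counitIso.app T).hom ≫ x) h1
    simp only [Iso.hom_inv_id_assoc, comp_zero] at h1'
    exact (Iso.hom_inv_id_assoc _ _).symm.trans h1'
  -- right add-T approximation of Lplus
  set n := Module.finrank k (T ⟶ Lplus) with hn
  set b : Module.Basis (Fin n) k (T ⟶ Lplus) := Module.finBasis k (T ⟶ Lplus) with hb
  set TT : C := ⨁ (fun _ : Fin n => T) with hTT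
  set p : TT ⟶ Lplus := biproduct.desc (fun i => b i) with hp
  have hponi : ∀ i, biproduct.ι (fun _ : Fin n => T) i ≫ p = b i := fun i => biproduct.ι_desc _ _
  have hsurj : ∀ h : T ⟶ Lplus, ∃ s : T ⟶ TT, s ≫ p = h := by
    intro h
    refine ⟨∑ i, b.repr h i • biproduct.ι (fun _ : Fin n => T) i, ?_⟩
    rw [Preadditive.sum_comp]
    simp only [Linear.smul_comp, hponi]
    exact b.sum_repr h
  -- complete p to a distinguished triangle
  obtain ⟨Z, q, w, hΔ⟩ := Pretriangulated.distinguished_cocone_triangle p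
  set Δ : Pretriangulated.Triangle C := Pretriangulated.Triangle.mk p q w with hΔdef
  have hΔ' : Δ.invRotate ∈ distTriang C := inv_rot_of_distTriang Δ hΔ
  -- Hom(T, TT⟦1⟧) = 0
  have hTTT1 : ∀ h : T ⟶ ((TT : C)⟦(1:ℤ)⟧ : C), h = 0 := by
    intro h
    obtain ⟨u, hu⟩ := (shiftFunctor C (1:ℤ)).map_surjective
      (((shiftEquiv C (1:ℤ)).counitIso.app T).hom ≫ h)
    have hu0 : u = 0 := by
      apply biproduct.hom_ext
      intro j
      rw [zero_comp]
      exact hm1 _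
    have h2 : ((shiftEquiv C (1:ℤ)).counitIso.app T).hom ≫ h = 0 := by
      rw [hu0, Functor.map_zero] at hu
      exact hu.symm
    calc h = ((shiftEquiv C (1:ℤ)).counitIso.app T).inv ≫
          (((shiftEquiv C (1:ℤ)).counitIso.app T).hom ≫ h) := by
          rw [← Category.assoc, Iso.inv_hom_id, Category.id_comp]
      _ = 0 := by rw [h2, comp_zero]
  -- Hom(T, Z) = 0
  have hTZ : ∀ u : T ⟶ Z, u = 0 := by
    intro u
    obtain ⟨g, hg⟩ := Pretriangulated.Triangle.coyoneda_exact₃ Δ hΔ u (hTTT1 (u ≫ w))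
    obtain ⟨s, hs⟩ := hsurj g
    have hpq : p ≫ q = 0 := Pretriangulated.comp_distTriang_mor_zero₁₂ Δ hΔ
    calc u = g ≫ q := hg
      _ = (s ≫ p) ≫ q := by rw [hs]; rfl
      _ = s ≫ (p ≫ q) := Category.assoc _ _ _
      _ = 0 := by rw [hpq, comp_zero]
  -- Hom(Z⟦-1⟧, T⟦1⟧) = 0, via Serre duality and CY2
  have hCYzero : ∀ f : ((Z : C)⟦(-1:ℤ)⟧ : C) ⟶ ((T : C)⟦(1:ℤ)⟧ : C), f = 0 := by
    intro f
    have hzero : ∀ φ : ((T : C)⟦(1:ℤ)⟧ : C) ⟶ S.Fun.obj ((Z : C)⟦(-1:ℤ)⟧), φ = 0 := by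
      intro φ
      set A : ((Z : C)⟦(1:ℤ)⟧ : C) ≅ (((Z : C)⟦(-1:ℤ)⟧ : C)⟦(2:ℤ)⟧ : C) :=
        (shiftFunctorAdd' C (-1) 2 1 (by norm_num)).app Z with hA
      set ψ : ((T : C)⟦(1:ℤ)⟧ : C) ⟶ ((Z : C)⟦(1:ℤ)⟧ : C) :=
        φ ≫ (ε.app ((Z : C)⟦(-1:ℤ)⟧)).inv ≫ A.inv with hψ
      obtain ⟨uz, huz⟩ := (shiftFunctor C (1:ℤ)).map_surjective ψ
      have huz0 : uz = 0 := hTZ uz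
      have hψ0 : ψ = 0 := by rw [← huz, huz0, Functor.map_zero]
      calc φ = (φ ≫ (ε.app ((Z : C)⟦(-1:ℤ)⟧)).inv ≫ A.inv) ≫ A.hom ≫
            (ε.app ((Z : C)⟦(-1:ℤ)⟧)).hom := by
            simp only [Category.assoc, Iso.inv_hom_id, Category.comp_id, Iso.inv_hom_id_assoc]
        _ = 0 := by rw [← hψ, hψ0, zero_comp]
    have hdual : S.eta ((Z : C)⟦(-1:ℤ)⟧) ((T : C)⟦(1:ℤ)⟧) f
        = S.eta ((Z : C)⟦(-1:ℤ)⟧) ((T : C)⟦(1:ℤ)⟧) 0 := by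
      apply LinearMap.ext
      intro x
      rw [hzero x, map_zero, map_zero]
    have := (S.eta ((Z : C)⟦(-1:ℤ)⟧) ((T : C)⟦(1:ℤ)⟧)).injective hdual
    simpa using this
  -- Z⟦-1⟧ ∈ add T
  obtain ⟨m, sZ, rZ, hsr⟩ := hT.2 ((Z : C)⟦(-1:ℤ)⟧) hCYzero
  -- fullness of Hom(T,-) at Lplus
  have full : ∀ α : (homFunctor T).obj Lplus ⟶ (homFunctor T).obj Lplus,
      ∃ f : Lplus ⟶ Lplus, ∀ h : T ⟶ Lplus, h ≫ f = α h := by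
    intro α
    set g : TT ⟶ Lplus := biproduct.desc (fun i => α (b i)) with hgdef
    have hioni : ∀ i, biproduct.ι (fun _ : Fin n => T) i ≫ g = α (b i) :=
      fun i => biproduct.ι_desc _ _
    have hg : ∀ h : T ⟶ TT, h ≫ g = α (h ≫ p) := by
      intro h
      have hdec : (∑ i, (h ≫ biproduct.π (fun _ : Fin n => T) i) ≫
          biproduct.ι (fun _ : Fin n => T) i) = h := by
        simp only [Category.assoc]
        rw [← Preadditive.comp_sum, biproduct.total, Category.comp_id]
      conv_lhs => rw [← hdec]
      conv_rhs => rw [← hdec]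
      rw [Preadditive.sum_comp, Preadditive.sum_comp]; erw [map_sum]
      apply Finset.sum_congr rfl
      intro i _
      have e1 : ((h ≫ biproduct.π (fun _ : Fin n => T) i) ≫
          biproduct.ι (fun _ : Fin n => T) i) ≫ g
          = (h ≫ biproduct.π (fun _ : Fin n => T) i) ≫ α (b i) := by
        rw [Category.assoc, hioni]
      have e2 : ((h ≫ biproduct.π (fun _ : Fin n => T) i) ≫
          biproduct.ι (fun _ : Fin n => T) i) ≫ p
          = (h ≫ biproduct.π (fun _ : Fin n => T) i) ≫ b i := by
        rw [Category.assoc, hponi]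
      rw [e1, e2]
      have e3 : (h ≫ biproduct.π (fun _ : Fin n => T) i) ≫ (b i : T ⟶ Lplus)
          = (MulOpposite.op (h ≫ biproduct.π (fun _ : Fin n => T) i) : (End T)ᵐᵒᵖ) • (b i) := rfl
      rw [e3]
      exact (map_smul (ConcreteCategory.hom α) _ _).symm
    -- the composite Z⟦-1⟧ → TT → Lplus is zero
    have htest : ∀ h : T ⟶ ((Z : C)⟦(-1:ℤ)⟧ : C), h ≫ (Δ.invRotate.mor₁ ≫ g) = 0 := by
      intro h
      refine (Category.assoc _ _ _).symm.trans ((hg (h ≫ Δ.invRotate.mor₁)).trans ?_)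
      have e4 : (h ≫ Δ.invRotate.mor₁) ≫ p
          = h ≫ (Δ.invRotate.mor₁ ≫ Δ.invRotate.mor₂) := by
        exact Category.assoc _ _ _
      refine (congrArg (ConcreteCategory.hom α) e4).trans ?_
      exact (congrArg (fun x => ConcreteCategory.hom α (h ≫ x))
        (Pretriangulated.comp_distTriang_mor_zero₁₂ _ hΔ')).trans
        ((congrArg (ConcreteCategory.hom α) comp_zero).trans (map_zero _))
    have h2 : rZ ≫ (Δ.invRotate.mor₁ ≫ g) = 0 := by
      apply biproduct.hom_ext'
      intro j
      rw [comp_zero, ← Category.assoc]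
      exact htest _
    have hmor1g : Δ.invRotate.mor₁ ≫ g = 0 := by
      have h3 : (sZ ≫ rZ) ≫ (Δ.invRotate.mor₁ ≫ g) = 0 := by rw [Category.assoc, h2, comp_zero]
      rw [hsr, Category.id_comp] at h3
      exact h3
    obtain ⟨f, hf⟩ := Pretriangulated.Triangle.yoneda_exact₂ Δ.invRotate hΔ' g hmor1g
    have hf' : g = p ≫ f := hf
    refine ⟨f, fun h => ?_⟩
    obtain ⟨s, hs⟩ := hsurj h
    subst hs
    exact (Category.assoc _ _ _).trans ((congrArg (fun x => s ≫ x) hf'.symm).trans (hg s))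
  -- transport endomorphisms along e : F(Lplus) ≅ L
  have hFadd : ∀ f₁ f₂ : Lplus ⟶ Lplus,
      (homFunctor T).map (f₁ + f₂) = (homFunctor T).map f₁ + (homFunctor T).map f₂ := by
    intro f₁ f₂
    apply ModuleCat.hom_ext; apply LinearMap.ext
    intro h
    exact Preadditive.comp_add _ _ _ _ _ _
  have hF0 : (homFunctor T).map (0 : Lplus ⟶ Lplus) = 0 := by
    apply ModuleCat.hom_ext; apply LinearMap.ext
    intro h
    exact comp_zero
  let Ψ : (Lplus ⟶ Lplus) → Module.End (End T)ᵐᵒᵖ L :=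
    fun f => (e.inv ≫ (homFunctor T).map f ≫ e.hom : L ⟶ L).hom
  have hΨcomp : ∀ f g : Lplus ⟶ Lplus, Ψ (f ≫ g) = Ψ g * Ψ f := by
    intro f g
    have h1 : (e.inv ≫ (homFunctor T).map (f ≫ g) ≫ e.hom : L ⟶ L)
        = (e.inv ≫ (homFunctor T).map f ≫ e.hom) ≫ (e.inv ≫ (homFunctor T).map g ≫ e.hom) := by
      rw [(homFunctor T).map_comp]
      simp only [Category.assoc, Iso.hom_inv_id_assoc]
    exact congrArg ModuleCat.Hom.hom h1
  have hΨone : Ψ (𝟙 Lplus) = 1 := by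
    have h1 : (e.inv ≫ (homFunctor T).map (𝟙 Lplus) ≫ e.hom : L ⟶ L) = 𝟙 L := by
      rw [(homFunctor T).map_id]
      simp only [Category.id_comp, Iso.inv_hom_id]
    exact congrArg ModuleCat.Hom.hom h1
  have hΨzero : Ψ (0 : Lplus ⟶ Lplus) = 0 := by
    have h1 : (e.inv ≫ (homFunctor T).map (0 : Lplus ⟶ Lplus) ≫ e.hom : L ⟶ L) = 0 := by
      rw [hF0, Limits.zero_comp, Limits.comp_zero]
    exact congrArg ModuleCat.Hom.hom h1
  have hΨadd : ∀ f₁ f₂ : Lplus ⟶ Lplus, Ψ (f₁ + f₂) = Ψ f₁ + Ψ f₂ := by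
    intro f₁ f₂
    have h1 : (e.inv ≫ (homFunctor T).map (f₁ + f₂) ≫ e.hom : L ⟶ L)
        = (e.inv ≫ (homFunctor T).map f₁ ≫ e.hom) + (e.inv ≫ (homFunctor T).map f₂ ≫ e.hom) := by
      rw [hFadd, Preadditive.add_comp, Preadditive.comp_add]
    exact congrArg ModuleCat.Hom.hom h1
  refine ⟨{
    toFun := fun x => MulOpposite.op (Ψ x.unop)
    map_one' := by
      show MulOpposite.op (Ψ (𝟙 Lplus)) = 1
      rw [hΨone, MulOpposite.op_one]
    map_mul' := by
      intro x y
      show MulOpposite.op (Ψ ((x * y).unop)) = MulOpposite.op (Ψ x.unop) * MulOpposite.op (Ψ y.unop)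
      rw [← MulOpposite.op_mul]
      congr 1
      have h1 : (x * y).unop = x.unop ≫ y.unop := rfl
      rw [h1, hΨcomp]
    map_zero' := by
      show MulOpposite.op (Ψ ((0 : (End Lplus)ᵐᵒᵖ).unop)) = 0
      have h1 : ((0 : (End Lplus)ᵐᵒᵖ).unop) = (0 : Lplus ⟶ Lplus) := rfl
      rw [h1, hΨzero, MulOpposite.op_zero]
    map_add' := by
      intro x y
      show MulOpposite.op (Ψ ((x + y).unop)) = MulOpposite.op (Ψ x.unop) + MulOpposite.op (Ψ y.unop)
      have h1 : (x + y).unop = x.unop + y.unop := rfl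
      rw [h1, hΨadd, MulOpposite.op_add]
  }, ?_⟩
  intro β
  obtain ⟨f, hf⟩ := full (e.hom ≫ ModuleCat.ofHom β.unop ≫ e.inv)
  refine ⟨MulOpposite.op f, ?_⟩
  apply MulOpposite.unop_injective
  show Ψ f = β.unop
  have hmap : (homFunctor T).map f = e.hom ≫ ModuleCat.ofHom β.unop ≫ e.inv := by
    apply ModuleCat.hom_ext; apply LinearMap.ext
    intro h
    exact hf h
  show (e.inv ≫ (homFunctor T).map f ≫ e.hom : L ⟶ L).hom = β.unop
  rw [hmap]
  simp only [Category.assoc, Iso.inv_hom_id, Category.comp_id, Iso.inv_hom_id_assoc, ModuleCat.hom_ofHom]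

end CYPaper
end

section
/- Let C be a Calabi–Yau triangulated category of CY-dimension 2 with a cluster-tilting object T and let Γ = End_C(T). Then the functor F = Hom_C(T,−): C → mod Γ induces an equivalence of categories C/add(ST) ≃ mod Γ. Moreover, F induces an equivalence from add T to the category of projective modules in mod Γ. -/
set_option linter.unusedVariables false
set_option linter.unusedSectionVars false

open CategoryTheory Limits Pretriangulated

universe v u u₂

namespace CYPaper

attribute [reducible] homFunctor

section Quot
variable {C : Type u} [Category.{v} C] [Preadditive C] [HasShift C ℤ] [HasFiniteBiproducts C]

/-- The ideal of morphisms factoring through `add (ST)`, as a `HomRel` on `C`: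
two morphisms are related if their difference factors through `add (ST)`. -/
def addSTRel (T : C) : HomRel C := fun X Y f g =>
  ∃ (Z : C) (u : X ⟶ Z) (v : Z ⟶ Y), inAdd (T⟦(1 : ℤ)⟧) Z ∧ u ≫ v = f - g

end Quot
section Aux
variable {k : Type*} [Field k]
variable {C : Type u} [Category.{v} C] [Preadditive C] [Linear k C]
  [HasZeroObject C] [HasShift C ℤ] [∀ n : ℤ, (shiftFunctor C n).Additive]
  [Pretriangulated C] [IsTriangulated C]
  [IsIdempotentComplete C] [HasFiniteBiproducts C]
  [∀ X Y : C, FiniteDimensional k (X ⟶ Y)]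
variable (T : C)

/-- Any map from `T` to an object of `add (T⟦1⟧)` vanishes. -/
lemma hom_to_addShift_zero (hT1 : ∀ f : T ⟶ T⟦(1 : ℤ)⟧, f = 0)
    {Z : C} (hZ : inAdd (T⟦(1 : ℤ)⟧) Z) (t : T ⟶ Z) : t = 0 := by
  obtain ⟨n, s, r, hsr⟩ := hZ
  have hs : t ≫ s = 0 := by
    apply biproduct.hom_ext
    intro i
    rw [Category.assoc, zero_comp]
    exact hT1 _
  calc t = t ≫ (s ≫ r) := by rw [hsr, Category.comp_id]
  _ = (t ≫ s) ≫ r := by rw [Category.assoc]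
  _ = 0 := by rw [hs, zero_comp]

/-- `add T` is stable under the shift in the obvious sense. -/
lemma inAdd_shift {W : C} (h : inAdd T W) : inAdd (T⟦(1 : ℤ)⟧) (W⟦(1 : ℤ)⟧) := by
  obtain ⟨n, s, r, hsr⟩ := h
  refine ⟨n, (shiftFunctor C (1 : ℤ)).map s ≫
      biproduct.lift (fun i => (shiftFunctor C (1 : ℤ)).map (biproduct.π (fun _ : Fin n => T) i)),
    biproduct.desc (fun i => (shiftFunctor C (1 : ℤ)).map (biproduct.ι (fun _ : Fin n => T) i)) ≫
      (shiftFunctor C (1 : ℤ)).map r, ?_⟩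
  have hcd : biproduct.lift (fun i => (shiftFunctor C (1 : ℤ)).map (biproduct.π (fun _ : Fin n => T) i)) ≫
      biproduct.desc (fun i => (shiftFunctor C (1 : ℤ)).map (biproduct.ι (fun _ : Fin n => T) i)) =
      𝟙 _ := by
    rw [biproduct.lift_desc]
    have : ∀ i : Fin n, (shiftFunctor C (1 : ℤ)).map (biproduct.π (fun _ : Fin n => T) i) ≫
        (shiftFunctor C (1 : ℤ)).map (biproduct.ι (fun _ : Fin n => T) i) =
        (shiftFunctor C (1 : ℤ)).map
          (biproduct.π (fun _ : Fin n => T) i ≫ biproduct.ι (fun _ : Fin n => T) i) := by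
      intro i; rw [Functor.map_comp]
    rw [Finset.sum_congr rfl (fun i _ => this i), ← Functor.map_sum, biproduct.total]
    exact (shiftFunctor C (1 : ℤ)).map_id _
  rw [Category.assoc, ← Category.assoc _ _ ((shiftFunctor C (1 : ℤ)).map r), hcd,
    Category.id_comp, ← Functor.map_comp, hsr]
  exact (shiftFunctor C (1 : ℤ)).map_id _

/-- Any map from `T` to a shifted object of `add T` vanishes. -/
lemma hom_to_shift_add_zero (hT1 : ∀ f : T ⟶ T⟦(1 : ℤ)⟧, f = 0)
    {B : C} (hB : inAdd T B) (t : T ⟶ B⟦(1 : ℤ)⟧) : t = 0 :=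
  hom_to_addShift_zero T hT1 (inAdd_shift T hB) t

end Aux
section Aux2
variable {k : Type*} [Field k]
variable {C : Type u} [Category.{v} C] [Preadditive C] [Linear k C]
  [HasZeroObject C] [HasShift C ℤ] [∀ n : ℤ, (shiftFunctor C n).Additive]
  [Pretriangulated C] [IsTriangulated C]
  [IsIdempotentComplete C] [HasFiniteBiproducts C]
  [∀ X Y : C, FiniteDimensional k (X ⟶ Y)]
variable (T : C)

/-- Serre duality / 2-CY vanishing: if `Hom(T, W⟦1⟧) = 0` then `Hom(W, T⟦1⟧) = 0`. -/
lemma serre_vanish (S : SerreData k C) (hCY : IsCY2 k C S)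
    {W : C} (hW : ∀ g : T ⟶ W⟦(1 : ℤ)⟧, g = 0) (f : W ⟶ T⟦(1 : ℤ)⟧) : f = 0 := by
  obtain ⟨η⟩ := hCY
  -- every map `T⟦1⟧ ⟶ S.Fun W` vanishes
  have hzero : ∀ g : (T⟦(1 : ℤ)⟧ : C) ⟶ S.Fun.obj W, g = 0 := by
    intro g
    have hA : IsIso (η.inv.app W ≫ (shiftFunctorAdd' C (1 : ℤ) 1 2 (by norm_num)).hom.app W) := by
      infer_instance
    obtain ⟨g'', hg''⟩ := (shiftFunctor C (1 : ℤ)).map_surjective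
      (g ≫ (η.inv.app W ≫ (shiftFunctorAdd' C (1 : ℤ) 1 2 (by norm_num)).hom.app W))
    have hz : g ≫ (η.inv.app W ≫ (shiftFunctorAdd' C (1 : ℤ) 1 2 (by norm_num)).hom.app W) = 0 := by
      rw [← hg'', hW g'']
      exact (shiftFunctor C (1 : ℤ)).map_zero _ _
    rw [← cancel_mono (η.inv.app W ≫ (shiftFunctorAdd' C (1 : ℤ) 1 2 (by norm_num)).hom.app W),
      zero_comp]
    exact hz
  -- now use the Serre duality pairing
  have h1 : S.eta W (T⟦(1 : ℤ)⟧) f = 0 := by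
    apply LinearMap.ext
    intro g
    simp [hzero g]
  have h2 : S.eta W (T⟦(1 : ℤ)⟧) f = S.eta W (T⟦(1 : ℤ)⟧) 0 := by rw [h1, map_zero]
  exact (S.eta W (T⟦(1 : ℤ)⟧)).injective h2

include k

/-- Existence of a right `add T`-approximation. -/
lemma exists_approx (X : C) :
    ∃ (n : ℕ) (q : (⨁ fun _ : Fin n => T) ⟶ X), ∀ t : T ⟶ X, ∃ u, u ≫ q = t := by
  classical
  let b := Module.finBasis k (T ⟶ X)
  refine ⟨Module.finrank k (T ⟶ X), biproduct.desc (fun i => b i), fun t => ?_⟩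
  refine ⟨biproduct.lift (fun i => (b.repr t) i • 𝟙 T), ?_⟩
  rw [biproduct.lift_desc]
  have : ∀ i, ((b.repr t) i • 𝟙 T) ≫ b i = (b.repr t) i • b i := by
    intro i; rw [Linear.smul_comp, Category.id_comp]
  rw [Finset.sum_congr rfl (fun i _ => this i)]
  exact b.sum_repr t

/-- Every object admits a presentation by a distinguished triangle with terms in `add T`. -/
lemma exists_presentation (S : SerreData k C) (hCY : IsCY2 k C S) (hT : IsClusterTilting T)
    (X : C) :
    ∃ (W B : C) (f : W ⟶ B) (q : B ⟶ X) (h : X ⟶ W⟦(1 : ℤ)⟧),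
      (Triangle.mk f q h ∈ distTriang C) ∧ inAdd T W ∧ inAdd T B ∧
      ∀ t : T ⟶ X, ∃ u : T ⟶ B, u ≫ q = t := by
  obtain ⟨n, q, happrox⟩ := exists_approx (k := k) T X
  obtain ⟨W, f, h, hdist⟩ := distinguished_cocone_triangle₁ q
  have hB : inAdd T (⨁ fun _ : Fin n => T) := ⟨n, 𝟙 _, 𝟙 _, Category.comp_id _⟩
  have hTW : ∀ g : T ⟶ W⟦(1 : ℤ)⟧, g = 0 := by
    intro g
    have hg : g ≫ (shiftFunctor C (1 : ℤ)).map f = 0 :=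
      hom_to_shift_add_zero T hT.1 hB _
    obtain ⟨g', hg'⟩ := Triangle.coyoneda_exact₁ _ hdist g hg
    obtain ⟨u, hu⟩ := happrox g'
    rw [hg', ← hu]
    show (u ≫ q) ≫ h = 0
    rw [Category.assoc]
    show u ≫ ((Triangle.mk f q h).mor₂ ≫ (Triangle.mk f q h).mor₃) = 0
    erw [comp_distTriang_mor_zero₂₃ _ hdist, comp_zero]
  exact ⟨W, _, f, q, h, hdist, hT.2 W (serre_vanish T S hCY hTW), hB, happrox⟩

end Aux2
section Aux3
variable {k : Type*} [Field k]
variable {C : Type u} [Category.{v} C] [Preadditive C] [Linear k C]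
  [HasZeroObject C] [HasShift C ℤ] [∀ n : ℤ, (shiftFunctor C n).Additive]
  [Pretriangulated C] [IsTriangulated C]
  [IsIdempotentComplete C] [HasFiniteBiproducts C]
  [∀ X Y : C, FiniteDimensional k (X ⟶ Y)]
variable (T : C)

lemma homFunctor_map_apply {X Y : C} (f : X ⟶ Y) (t : T ⟶ X) :
    ((homFunctor T).map f) t = t ≫ f := rfl

lemma homFunctor_map_sub {X Y : C} (f g : X ⟶ Y) :
    (homFunctor T).map (f - g) = (homFunctor T).map f - (homFunctor T).map g := by
  apply ModuleCat.hom_ext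
  apply LinearMap.ext
  intro t
  show t ≫ (f - g) = t ≫ f - t ≫ g
  exact Preadditive.comp_sub _ _ _

/-- `F` is faithful on maps out of `add T`. -/
lemma F_faithful_add {B : C} (hB : inAdd T B) {X : C} (g : B ⟶ X)
    (hg : (homFunctor T).map g = 0) : g = 0 := by
  obtain ⟨n, s, r, hsr⟩ := hB
  have hr : r ≫ g = 0 := by
    apply biproduct.hom_ext'
    intro i
    have := LinearMap.congr_fun (congrArg ModuleCat.Hom.hom hg) (biproduct.ι (fun _ : Fin n => T) i ≫ r)
    rw [homFunctor_map_apply] at this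
    rw [comp_zero, ← Category.assoc]
    exact this
  calc g = (s ≫ r) ≫ g := by rw [hsr, Category.id_comp]
  _ = s ≫ (r ≫ g) := Category.assoc _ _ _
  _ = 0 := by rw [hr, comp_zero]

lemma F_faithful_add' {B : C} (hB : inAdd T B) {X : C} (g g' : B ⟶ X)
    (hg : (homFunctor T).map g = (homFunctor T).map g') : g = g' := by
  have : (homFunctor T).map (g - g') = 0 := by
    rw [homFunctor_map_sub, hg, sub_self]
  have := F_faithful_add T hB _ this
  rwa [sub_eq_zero] at this

/-- any map from `T` into a biproduct of copies of `T` is the canonical sum of its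
components. -/
lemma hom_into_biproduct {n : ℕ} (u : T ⟶ ⨁ fun _ : Fin n => T) :
    ∑ i : Fin n, (u ≫ biproduct.π (fun _ : Fin n => T) i) ≫ biproduct.ι (fun _ : Fin n => T) i
      = u := by
  calc ∑ i : Fin n, (u ≫ biproduct.π (fun _ : Fin n => T) i) ≫ biproduct.ι (fun _ : Fin n => T) i
      = ∑ i : Fin n, u ≫ (biproduct.π (fun _ : Fin n => T) i ≫ biproduct.ι (fun _ : Fin n => T) i) := by
        refine Finset.sum_congr rfl (fun i _ => ?_)
        rw [Category.assoc]
  _ = u ≫ ∑ i : Fin n, biproduct.π (fun _ : Fin n => T) i ≫ biproduct.ι (fun _ : Fin n => T) i := by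
        rw [Preadditive.comp_sum]
  _ = u := by rw [biproduct.total, Category.comp_id]

/-- `F` is full on maps out of `add T`. -/
lemma F_full_add {B : C} (hB : inAdd T B) {X : C}
    (φ : (homFunctor T).obj B ⟶ (homFunctor T).obj X) :
    ∃ g : B ⟶ X, (homFunctor T).map g = φ := by
  obtain ⟨n, s, r, hsr⟩ := hB
  refine ⟨s ≫ biproduct.desc (fun i => φ (biproduct.ι (fun _ : Fin n => T) i ≫ r)), ?_⟩
  apply ModuleCat.hom_ext
  apply LinearMap.ext
  intro u
  erw [homFunctor_map_apply]
  have huB : ∀ w : T ⟶ ⨁ fun _ : Fin n => T,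
      w ≫ biproduct.desc (fun i => φ (biproduct.ι (fun _ : Fin n => T) i ≫ r)) = φ (w ≫ r) := by
    intro w
    conv_lhs => rw [← hom_into_biproduct T w]
    rw [Preadditive.sum_comp]
    have : ∀ i : Fin n,
        ((w ≫ biproduct.π (fun _ : Fin n => T) i) ≫ biproduct.ι (fun _ : Fin n => T) i) ≫
          biproduct.desc (fun i => φ (biproduct.ι (fun _ : Fin n => T) i ≫ r)) =
        φ (((w ≫ biproduct.π (fun _ : Fin n => T) i) ≫ biproduct.ι (fun _ : Fin n => T) i) ≫ r) := by
      intro i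
      rw [Category.assoc, biproduct.ι_desc]
      have hsm := φ.hom.map_smul
        (MulOpposite.op (w ≫ biproduct.π (fun _ : Fin n => T) i) : (End T)ᵐᵒᵖ)
        (biproduct.ι (fun _ : Fin n => T) i ≫ r)
      have h1 : (MulOpposite.op (w ≫ biproduct.π (fun _ : Fin n => T) i) : (End T)ᵐᵒᵖ) •
          (biproduct.ι (fun _ : Fin n => T) i ≫ r) =
          (w ≫ biproduct.π (fun _ : Fin n => T) i) ≫
            (biproduct.ι (fun _ : Fin n => T) i ≫ r) := rfl
      have h2 : ∀ (x : T ⟶ X),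
          (MulOpposite.op (w ≫ biproduct.π (fun _ : Fin n => T) i) : (End T)ᵐᵒᵖ) • x =
          (w ≫ biproduct.π (fun _ : Fin n => T) i) ≫ x := fun _ => rfl
      rw [h1, h2] at hsm
      rw [← hsm]
      exact congrArg φ (by simp)
    rw [Finset.sum_congr rfl (fun i _ => this i)]
    have hms := map_sum φ.hom
      (fun i => ((w ≫ biproduct.π (fun _ : Fin n => T) i) ≫ biproduct.ι (fun _ : Fin n => T) i) ≫ r)
      Finset.univ
    have e4 : (∑ i : Fin n,
        ((w ≫ biproduct.π (fun _ : Fin n => T) i) ≫ biproduct.ι (fun _ : Fin n => T) i) ≫ r)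
        = w ≫ r := by
      rw [← Preadditive.sum_comp, hom_into_biproduct T w]
    calc ∑ i : Fin n,
        φ (((w ≫ biproduct.π (fun _ : Fin n => T) i) ≫ biproduct.ι (fun _ : Fin n => T) i) ≫ r)
        = φ (∑ i : Fin n,
        ((w ≫ biproduct.π (fun _ : Fin n => T) i) ≫ biproduct.ι (fun _ : Fin n => T) i) ≫ r) :=
          hms.symm
    _ = φ (w ≫ r) := congrArg φ e4
  rw [← Category.assoc, huB (u ≫ s), Category.assoc, hsr, Category.comp_id]

/-- `F` is full. -/
lemma F_full (S : SerreData k C) (hCY : IsCY2 k C S) (hT : IsClusterTilting T)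
    {X Y : C} (φ : (homFunctor T).obj X ⟶ (homFunctor T).obj Y) :
    ∃ g : X ⟶ Y, (homFunctor T).map g = φ := by
  obtain ⟨W, B, f₀, q, h, hdist, hW, hB, happrox⟩ := exists_presentation T S hCY hT X
  obtain ⟨g₀, hg₀⟩ := F_full_add T hB ((homFunctor T).map q ≫ φ)
  have hfg₀ : f₀ ≫ g₀ = 0 := by
    apply F_faithful_add T hW
    apply ModuleCat.hom_ext
    apply LinearMap.ext
    intro t
    rw [ModuleCat.hom_zero, LinearMap.zero_apply]
    erw [homFunctor_map_apply]
    have e1 : t ≫ f₀ ≫ g₀ = ((homFunctor T).map g₀) (t ≫ f₀) := by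
      rw [homFunctor_map_apply, Category.assoc]
    rw [e1, hg₀]
    have e2 : ((homFunctor T).map q ≫ φ) (t ≫ f₀) = φ ((t ≫ f₀) ≫ q) := rfl
    rw [e2]
    have e3 : (t ≫ f₀) ≫ q = 0 := by
      rw [Category.assoc]
      show t ≫ ((Triangle.mk f₀ q h).mor₁ ≫ (Triangle.mk f₀ q h).mor₂) = 0
      erw [comp_distTriang_mor_zero₁₂ _ hdist, comp_zero]
    rw [e3, map_zero]
  obtain ⟨g, hg⟩ := Triangle.yoneda_exact₂ _ hdist g₀ hfg₀
  have hg' : g₀ = q ≫ g := hg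
  refine ⟨g, ?_⟩
  apply ModuleCat.hom_ext
  apply LinearMap.ext
  intro t
  obtain ⟨u, hu⟩ := happrox t
  erw [homFunctor_map_apply]
  rw [← hu]
  erw [Category.assoc, ← hg']
  have : u ≫ g₀ = ((homFunctor T).map g₀) u := rfl
  rw [this, hg₀]
  rfl

/-- kernel of `F`: morphisms killed by `F` factor through `add (T⟦1⟧)`. -/
lemma F_kernel (S : SerreData k C) (hCY : IsCY2 k C S) (hT : IsClusterTilting T)
    {X Y : C} (f g : X ⟶ Y) (hfg : (homFunctor T).map f = (homFunctor T).map g) :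
    addSTRel T f g := by
  obtain ⟨W, B, f₀, q, h, hdist, hW, hB, happrox⟩ := exists_presentation T S hCY hT X
  have hx : (homFunctor T).map (f - g) = 0 := by rw [homFunctor_map_sub, hfg, sub_self]
  have hq : q ≫ (f - g) = 0 := by
    apply F_faithful_add T hB
    apply ModuleCat.hom_ext
    apply LinearMap.ext
    intro u
    erw [homFunctor_map_apply]
    rw [← Category.assoc]
    have := LinearMap.congr_fun (congrArg ModuleCat.Hom.hom hx) (u ≫ q)
    rw [homFunctor_map_apply] at this
    exact this
  obtain ⟨v, hv⟩ := Triangle.yoneda_exact₃ _ hdist (f - g) hq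
  exact ⟨W⟦(1 : ℤ)⟧, h, v, inAdd_shift T hW, hv.symm⟩

end Aux3
section Aux4
variable {k : Type*} [Field k]
variable {C : Type u} [Category.{v} C] [Preadditive C] [Linear k C]
  [HasZeroObject C] [HasShift C ℤ] [∀ n : ℤ, (shiftFunctor C n).Additive]
  [Pretriangulated C] [IsTriangulated C]
  [IsIdempotentComplete C] [HasFiniteBiproducts C]
  [∀ X Y : C, FiniteDimensional k (X ⟶ Y)]
variable (T : C)

instance homScalarTower (X : C) : IsScalarTower k (End T)ᵐᵒᵖ (T ⟶ X) := by
  constructor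
  intro lam phi f
  show ((lam • phi).unop) ≫ f = lam • (phi.unop ≫ f)
  rw [MulOpposite.unop_smul]
  exact Linear.smul_comp _ _ _ _ _ _

include k in
lemma finite_hom (X : C) : Module.Finite (End T)ᵐᵒᵖ (T ⟶ X) := by
  classical
  let b := Module.finBasis k (T ⟶ X)
  rw [Module.finite_def]
  refine ⟨Finset.image b Finset.univ, ?_⟩
  rw [eq_top_iff]
  intro x _
  have hx := b.sum_repr x
  rw [← hx]
  apply Submodule.sum_mem
  intro i _
  have : (b.repr x) i • b i = (MulOpposite.op ((b.repr x) i • 𝟙 T) : (End T)ᵐᵒᵖ) • b i := by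
    show _ = ((b.repr x) i • 𝟙 T) ≫ b i
    rw [Linear.smul_comp, Category.id_comp]
  rw [this]
  exact Submodule.smul_mem _ _ (Submodule.subset_span (by simp))

/-- The standard identification `Hom(T, Tⁿ) ≅ Γⁿ` of right `Γ`-modules. -/
noncomputable def biprodHomEquiv (n : ℕ) :
    (T ⟶ ⨁ fun _ : Fin n => T) ≃ₗ[(End T)ᵐᵒᵖ] (Fin n → (End T)ᵐᵒᵖ) where
  toFun t := fun i => MulOpposite.op (t ≫ biproduct.π (fun _ : Fin n => T) i)
  map_add' t t' := by
    funext i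
    show MulOpposite.op ((t + t') ≫ biproduct.π (fun _ : Fin n => T) i) = _
    rw [Preadditive.add_comp]
    rfl
  map_smul' phi t := by
    funext i
    show MulOpposite.op ((phi.unop ≫ t) ≫ biproduct.π (fun _ : Fin n => T) i) =
      phi * (MulOpposite.op (t ≫ biproduct.π (fun _ : Fin n => T) i) : (End T)ᵐᵒᵖ)
    apply MulOpposite.unop_injective
    simp only [MulOpposite.unop_mul, MulOpposite.unop_op]
    rw [CategoryTheory.End.mul_def, Category.assoc]
  invFun v := biproduct.lift (fun i => (v i).unop)
  left_inv t := by
    apply biproduct.hom_ext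
    intro i
    rw [biproduct.lift_π]
    rfl
  right_inv v := by
    funext i
    show MulOpposite.op (biproduct.lift (fun j => (v j).unop) ≫
      biproduct.π (fun _ : Fin n => T) i) = v i
    rw [biproduct.lift_π, MulOpposite.op_unop]

end Aux4
section Aux5
variable {k : Type*} [Field k]
variable {C : Type u} [Category.{v} C] [Preadditive C] [Linear k C]
  [HasZeroObject C] [HasShift C ℤ] [∀ n : ℤ, (shiftFunctor C n).Additive]
  [Pretriangulated C] [IsTriangulated C]
  [IsIdempotentComplete C] [HasFiniteBiproducts C]
  [∀ X Y : C, FiniteDimensional k (X ⟶ Y)]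
variable (T : C)

include k in
lemma exists_module_presentation (M : Type v) [AddCommGroup M] [Module (End T)ᵐᵒᵖ M]
    [Module.Finite (End T)ᵐᵒᵖ M] :
    ∃ (m n : ℕ) (π : (Fin m → (End T)ᵐᵒᵖ) →ₗ[(End T)ᵐᵒᵖ] M)
      (δ : (Fin n → (End T)ᵐᵒᵖ) →ₗ[(End T)ᵐᵒᵖ] (Fin m → (End T)ᵐᵒᵖ)),
      Function.Surjective π ∧ LinearMap.range δ = LinearMap.ker π := by
  obtain ⟨m, π, hπ⟩ := Module.Finite.exists_fin' (End T)ᵐᵒᵖ M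
  haveI i1 : FiniteDimensional k (End T) := inferInstanceAs (FiniteDimensional k (T ⟶ T))
  haveI i2 : FiniteDimensional k (End T)ᵐᵒᵖ :=
    Module.Finite.equiv (MulOpposite.opLinearEquiv k (M := End T))
  haveI i3 : IsNoetherian k (Fin m → (End T)ᵐᵒᵖ) := IsNoetherian.iff_fg.2 inferInstance
  haveI i4 : IsNoetherian (End T)ᵐᵒᵖ (Fin m → (End T)ᵐᵒᵖ) := isNoetherian_of_tower k i3
  haveI i5 : Module.Finite (End T)ᵐᵒᵖ (LinearMap.ker π) :=
    Module.Finite.iff_fg.2 (IsNoetherian.noetherian _)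
  obtain ⟨n, ρ, hρ⟩ := Module.Finite.exists_fin' (End T)ᵐᵒᵖ (LinearMap.ker π)
  refine ⟨m, n, π, (LinearMap.ker π).subtype ∘ₗ ρ, hπ, ?_⟩
  rw [LinearMap.range_comp, LinearMap.range_eq_top.2 hρ, Submodule.map_top,
    Submodule.range_subtype]

/-- Essential surjectivity: every finite module comes from an object of `C`. -/
lemma exists_hom_equiv (S : SerreData k C) (hCY : IsCY2 k C S) (hT : IsClusterTilting T)
    (M : ModuleCat.{v} (End T)ᵐᵒᵖ) (hM : Module.Finite (End T)ᵐᵒᵖ M) :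
    ∃ X : C, Nonempty ((T ⟶ X) ≃ₗ[(End T)ᵐᵒᵖ] M) := by
  haveI := hM
  obtain ⟨m, n, π, δ, hπ, hδ⟩ := exists_module_presentation (k := k) T M
  let em := biprodHomEquiv T m
  let en := biprodHomEquiv T n
  obtain ⟨p, hp⟩ := F_full_add T (X := ⨁ fun _ : Fin m => T)
    ⟨n, 𝟙 _, 𝟙 _, Category.comp_id _⟩
    (ModuleCat.ofHom (em.symm.toLinearMap ∘ₗ δ ∘ₗ en.toLinearMap :
      (T ⟶ ⨁ fun _ : Fin n => T) →ₗ[(End T)ᵐᵒᵖ] (T ⟶ ⨁ fun _ : Fin m => T)))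
  obtain ⟨X, q, h, hdist⟩ := distinguished_cocone_triangle p
  have hpq : p ≫ q = 0 := comp_distTriang_mor_zero₁₂ _ hdist
  let Fq : (T ⟶ ⨁ fun _ : Fin m => T) →ₗ[(End T)ᵐᵒᵖ] (T ⟶ X) := ((homFunctor T).map q).hom
  let phih : (T ⟶ ⨁ fun _ : Fin m => T) →ₗ[(End T)ᵐᵒᵖ] M := π ∘ₗ em.toLinearMap
  have hFq_surj : Function.Surjective Fq := by
    intro t
    have hth : t ≫ h = 0 :=
      hom_to_shift_add_zero T hT.1 ⟨n, 𝟙 _, 𝟙 _, Category.comp_id _⟩ _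
    obtain ⟨u, hu⟩ := Triangle.coyoneda_exact₃ _ hdist t hth
    exact ⟨u, hu.symm⟩
  have hphih_surj : Function.Surjective phih := by
    intro y
    obtain ⟨x, hx⟩ := hπ y
    exact ⟨em.symm x, by simp [phih, LinearEquiv.apply_symm_apply, hx]⟩
  have hFp_pt : ∀ w : T ⟶ ⨁ fun _ : Fin n => T, w ≫ p = em.symm (δ (en w)) := by
    intro w
    have h1 : ((homFunctor T).map p) w = w ≫ p := rfl
    rw [← h1, hp]
    rfl
  have hkereq : LinearMap.ker Fq = LinearMap.ker phih := by
    ext u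
    simp only [LinearMap.mem_ker]
    constructor
    · intro hu
      have hu' : u ≫ q = 0 := hu
      obtain ⟨w, hw⟩ := Triangle.coyoneda_exact₂ _ hdist u hu'
      have : em u ∈ LinearMap.ker π := by
        rw [← hδ]
        refine ⟨en w, ?_⟩
        erw [show u = w ≫ p from hw, hFp_pt w, LinearEquiv.apply_symm_apply]
      exact this
    · intro hu
      have : em u ∈ LinearMap.range δ := by
        rw [hδ]
        exact hu
      obtain ⟨v, hv⟩ := this
      have h3 : u = (en.symm v) ≫ p := by
        rw [hFp_pt (en.symm v), LinearEquiv.apply_symm_apply, hv,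
          LinearEquiv.symm_apply_apply]
      show u ≫ q = 0
      rw [h3, Category.assoc, hpq, comp_zero]
  let E1 := LinearMap.quotKerEquivOfSurjective Fq hFq_surj
  let E2 := LinearMap.quotKerEquivOfSurjective phih hphih_surj
  exact ⟨X, ⟨E1.symm.trans ((Submodule.quotEquivOfEq _ _ hkereq).trans E2)⟩⟩

include k in
lemma proj_hom {X : C} (hX : inAdd T X) :
    Module.Projective (End T)ᵐᵒᵖ (T ⟶ X) := by
  obtain ⟨n, s, r, hsr⟩ := hX
  refine Module.Projective.of_split
    (M := Fin n → (End T)ᵐᵒᵖ)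
    ((biprodHomEquiv T n).toLinearMap ∘ₗ
      (((homFunctor T).map s).hom : (T ⟶ X) →ₗ[(End T)ᵐᵒᵖ] (T ⟶ ⨁ fun _ : Fin n => T)))
    ((((homFunctor T).map r).hom : (T ⟶ ⨁ fun _ : Fin n => T) →ₗ[(End T)ᵐᵒᵖ] (T ⟶ X)) ∘ₗ
      (biprodHomEquiv T n).symm.toLinearMap) ?_
  apply LinearMap.ext
  intro t
  show ((homFunctor T).map r) ((biprodHomEquiv T n).symm ((biprodHomEquiv T n)
    (((homFunctor T).map s) t))) = t
  erw [LinearEquiv.symm_apply_apply]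
  show (t ≫ s) ≫ r = t
  rw [Category.assoc, hsr, Category.comp_id]

/-- Essential surjectivity onto finite projective modules, with image in `add T`. -/
lemma exists_addT_hom_equiv (hT : IsClusterTilting T) (M : ModuleCat.{v} (End T)ᵐᵒᵖ)
    (hMfin : Module.Finite (End T)ᵐᵒᵖ M) (hMproj : Module.Projective (End T)ᵐᵒᵖ M) :
    ∃ Y : C, inAdd T Y ∧ Nonempty ((T ⟶ Y) ≃ₗ[(End T)ᵐᵒᵖ] M) := by
  haveI := hMfin
  haveI := hMproj
  obtain ⟨n, σ, hσ⟩ := Module.Finite.exists_fin' (End T)ᵐᵒᵖ M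
  obtain ⟨s, hs⟩ := Module.projective_lifting_property σ LinearMap.id hσ
  let en := biprodHomEquiv T n
  obtain ⟨e, he⟩ := F_full_add T (X := ⨁ fun _ : Fin n => T)
    ⟨n, 𝟙 _, 𝟙 _, Category.comp_id _⟩
    (ModuleCat.ofHom (en.symm.toLinearMap ∘ₗ s ∘ₗ σ ∘ₗ en.toLinearMap :
      (T ⟶ ⨁ fun _ : Fin n => T) →ₗ[(End T)ᵐᵒᵖ] (T ⟶ ⨁ fun _ : Fin n => T)))
  have he_pt : ∀ w : T ⟶ ⨁ fun _ : Fin n => T, w ≫ e = en.symm (s (σ (en w))) := by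
    intro w
    have h1 : ((homFunctor T).map e) w = w ≫ e := rfl
    rw [← h1, he]
    rfl
  have hs_pt : ∀ x : M, σ (s x) = x := fun x => LinearMap.congr_fun hs x
  have hee : e ≫ e = e := by
    apply F_faithful_add' T (B := ⨁ fun _ : Fin n => T) ⟨n, 𝟙 _, 𝟙 _, Category.comp_id _⟩
    apply ModuleCat.hom_ext
    apply LinearMap.ext
    intro u
    erw [homFunctor_map_apply, homFunctor_map_apply]
    rw [← Category.assoc, he_pt, he_pt,
      LinearEquiv.apply_symm_apply, hs_pt]
  obtain ⟨Y, i, e', hie, hei⟩ := IsIdempotentComplete.idempotents_split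
    (⨁ fun _ : Fin n => T) e hee
  refine ⟨Y, ⟨n, i, e', hie⟩, ⟨LinearEquiv.ofLinear
    (σ ∘ₗ en.toLinearMap ∘ₗ
      (((homFunctor T).map i).hom : (T ⟶ Y) →ₗ[(End T)ᵐᵒᵖ] (T ⟶ ⨁ fun _ : Fin n => T)))
    ((((homFunctor T).map e').hom : (T ⟶ ⨁ fun _ : Fin n => T) →ₗ[(End T)ᵐᵒᵖ] (T ⟶ Y)) ∘ₗ
      en.symm.toLinearMap ∘ₗ s) ?_ ?_⟩⟩
  · apply LinearMap.ext
    intro x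
    show σ (en ((en.symm (s x) ≫ e') ≫ i)) = x
    have h4 : (en.symm (s x) ≫ e') ≫ i = en.symm (s x) ≫ e := by
      rw [Category.assoc, hei]
    rw [h4, he_pt, LinearEquiv.apply_symm_apply, LinearEquiv.apply_symm_apply, hs_pt, hs_pt]
  · apply LinearMap.ext
    intro t
    show en.symm (s (σ (en (t ≫ i)))) ≫ e' = t
    rw [← he_pt (t ≫ i), Category.assoc, Category.assoc]
    have h5 : i ≫ e ≫ e' = 𝟙 Y := by
      calc i ≫ e ≫ e' = (i ≫ e') ≫ i ≫ e' := by
            rw [← hei]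
            simp only [Category.assoc]
      _ = 𝟙 Y := by rw [hie, Category.id_comp]
    rw [h5, Category.comp_id]

end Aux5
/-- **Theorem (Keller–Reiten).** Let `C` be a 2-Calabi–Yau triangulated category with a
cluster-tilting object `T` and `Γ = End_C(T)`. The functor `F = Hom_C(T,−) : C → mod Γ`
induces an equivalence `C / add(ST) ≃ mod Γ`; moreover `F` induces an equivalence from
`add T` to the category of projective modules in `mod Γ`. -/
theorem quotient_equivalence_mod_and_projectives
    {k : Type*} [Field k] [IsAlgClosed k]
    {C : Type u} [Category.{v} C] [Preadditive C] [Linear k C]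
    [HasZeroObject C] [HasShift C ℤ] [∀ n : ℤ, (shiftFunctor C n).Additive]
    [Pretriangulated C] [IsTriangulated C]
    [IsIdempotentComplete C] [HasFiniteBiproducts C]
    [∀ X Y : C, FiniteDimensional k (X ⟶ Y)]
    (S : SerreData k C) (hCY : IsCY2 k C S)
    (T : C) (hT : IsClusterTilting T) :
    (∃ Fbar : CategoryTheory.Quotient (addSTRel T) ⥤
        ObjectProperty.FullSubcategory (fun M : ModuleCat.{v} (End T)ᵐᵒᵖ => Module.Finite (End T)ᵐᵒᵖ M),
      Nonempty (CategoryTheory.Quotient.functor (addSTRel T) ⋙ Fbar ⋙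
          ObjectProperty.ι _ ≅ homFunctor T) ∧ Fbar.IsEquivalence) ∧
    (∃ Fp : ObjectProperty.FullSubcategory (fun X : C => inAdd T X) ⥤
        ObjectProperty.FullSubcategory (fun M : ModuleCat.{v} (End T)ᵐᵒᵖ =>
          Module.Finite (End T)ᵐᵒᵖ M ∧ Module.Projective (End T)ᵐᵒᵖ M),
      Nonempty (Fp ⋙ ObjectProperty.ι _ ≅
          ObjectProperty.ι (fun X : C => inAdd T X) ⋙ homFunctor T) ∧
      Fp.IsEquivalence) := by
  have hfin : ∀ X : C, Module.Finite (End T)ᵐᵒᵖ ((homFunctor T).obj X) :=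
    fun X => finite_hom (k := k) T X
  constructor
  · -- The quotient equivalence
    let G : C ⥤ ObjectProperty.FullSubcategory
        (fun M : ModuleCat.{v} (End T)ᵐᵒᵖ => Module.Finite (End T)ᵐᵒᵖ M) :=
      ObjectProperty.lift _ (homFunctor T) hfin
    have hrel : ∀ (x y : C) (f g : x ⟶ y), addSTRel T f g → G.map f = G.map g := by
      intro x y f g hfg
      obtain ⟨Z, u, v, hZ, huv⟩ := hfg
      apply ObjectProperty.hom_ext
      show (homFunctor T).map f = (homFunctor T).map g
      have hz : (homFunctor T).map (f - g) = 0 := by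
        apply ModuleCat.hom_ext
        apply LinearMap.ext
        intro t
        rw [ModuleCat.hom_zero, LinearMap.zero_apply, homFunctor_map_apply, ← huv, ← Category.assoc,
          hom_to_addShift_zero T hT.1 hZ (t ≫ u), zero_comp]
      rw [homFunctor_map_sub] at hz
      rwa [sub_eq_zero] at hz
    let Fbar := CategoryTheory.Quotient.lift (addSTRel T) G hrel
    have hmapG : ∀ {x y : C} (f : x ⟶ y),
        Fbar.map ((CategoryTheory.Quotient.functor (addSTRel T)).map f) = G.map f :=
      fun f => CategoryTheory.Quotient.lift_map_functor_map (addSTRel T) G hrel f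
    refine ⟨Fbar, ⟨?_⟩, ?_⟩
    · have e1 : CategoryTheory.Quotient.functor (addSTRel T) ⋙ Fbar ⋙
          ObjectProperty.ι _ =
          G ⋙ ObjectProperty.ι _ := by
        rw [← Functor.assoc, CategoryTheory.Quotient.lift_spec]
      exact eqToIso e1 ≪≫ ObjectProperty.liftCompιIso _ _ _
    · have hfull : Fbar.Full := by
        constructor
        rintro ⟨X⟩ ⟨Y⟩ φ
        obtain ⟨g, hg⟩ := F_full T S hCY hT
          (φ.hom : (homFunctor T).obj X ⟶ (homFunctor T).obj Y)
        refine ⟨(CategoryTheory.Quotient.functor (addSTRel T)).map g, ?_⟩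
        rw [hmapG g]
        exact ObjectProperty.hom_ext _ hg
      have hfaithful : Fbar.Faithful := by
        constructor
        rintro ⟨X⟩ ⟨Y⟩ ⟨f⟩ ⟨g⟩ hfg
        have e1 := hmapG f
        have e2 := hmapG g
        have h1 : (homFunctor T).map f = (homFunctor T).map g := by
          have : G.map f = G.map g := by
            rw [← e1, ← e2]
            exact hfg
          exact congrArg (fun ψ => ψ.hom) this
        exact CategoryTheory.Quotient.sound _ (F_kernel T S hCY hT f g h1)
      have hess : Fbar.EssSurj := by
        constructor
        intro M'
        obtain ⟨X, ⟨eqv⟩⟩ := exists_hom_equiv T S hCY hT M'.obj M'.property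
        refine ⟨(CategoryTheory.Quotient.functor (addSTRel T)).obj X, ⟨?_⟩⟩
        exact (ObjectProperty.ι _).preimageIso eqv.toModuleIso
      exact { faithful := hfaithful, full := hfull, essSurj := hess }
  · -- The projectives equivalence
    have hP : ∀ X : ObjectProperty.FullSubcategory (fun X : C => inAdd T X),
        (fun M : ModuleCat.{v} (End T)ᵐᵒᵖ =>
          Module.Finite (End T)ᵐᵒᵖ M ∧ Module.Projective (End T)ᵐᵒᵖ M)
          ((ObjectProperty.ι (fun X : C => inAdd T X) ⋙ homFunctor T).obj X) :=
      fun X => ⟨finite_hom (k := k) T X.obj, proj_hom (k := k) T X.property⟩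
    let Fp := ObjectProperty.lift
      (fun M : ModuleCat.{v} (End T)ᵐᵒᵖ =>
        Module.Finite (End T)ᵐᵒᵖ M ∧ Module.Projective (End T)ᵐᵒᵖ M)
      (ObjectProperty.ι (fun X : C => inAdd T X) ⋙ homFunctor T) hP
    refine ⟨Fp, ⟨ObjectProperty.liftCompιIso _ _ _⟩, ?_⟩
    have hfull : Fp.Full := by
      constructor
      intro X Y φ
      obtain ⟨g, hg⟩ := F_full_add T X.property
        (φ.hom : (homFunctor T).obj X.obj ⟶ (homFunctor T).obj Y.obj)
      exact ⟨ObjectProperty.homMk g, ObjectProperty.hom_ext _ hg⟩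
    have hfaithful : Fp.Faithful := by
      constructor
      intro X Y f g hfg
      exact ObjectProperty.hom_ext _ (F_faithful_add' T X.property f.hom g.hom (congrArg (fun ψ => ψ.hom) hfg))
    have hess : Fp.EssSurj := by
      constructor
      intro M'
      obtain ⟨Y, hY, ⟨eqv⟩⟩ := exists_addT_hom_equiv T hT M'.obj M'.property.1 M'.property.2
      refine ⟨⟨Y, hY⟩, ⟨?_⟩⟩
      exact (ObjectProperty.ι _).preimageIso eqv.toModuleIso
    exact { faithful := hfaithful, full := hfull, essSurj := hess }

end CYPaper
end
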